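/- Let T be a rooted binary tree with n leaves. For every positive integer m, every lattice point z ∈ ℤ^{Int(T)} lying in the dilate m·R_T can be written as a sum of m top-vectors of systems of disjoint paths in T. In particular, the CFN-MC polytope R_T is a normal lattice polytope. -/

import Mathlib

open Pointwise

/-- A rooted binary tree on the finite vertex type `V`, presented by its parent function:
the root is its own parent, every vertex reaches the root by iterating the parent map,
every vertex has either no children (a leaf) or exactly two children, and the root has
exactly two children (so the root has degree 2, leaves have degree 1, and all other
vertices have degree 3). -/
structure RBT (V : Type) [Fintype V] [DecidableEq V] : Type where
  root : V
  parent : V → V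
  parent_root : parent root = root
  reaches : ∀ v : V, ∃ k : ℕ, parent^[k] v = root
  binary : ∀ v : V,
    Nat.card {u : V // parent u = v ∧ u ≠ v} = 0 ∨
      Nat.card {u : V // parent u = v ∧ u ≠ v} = 2
  root_binary : Nat.card {u : V // parent u = root ∧ u ≠ root} = 2

namespace RBT

variable {V : Type} [Fintype V] [DecidableEq V] (T : RBT V)

/-- `u` is a child of `v` in `T`. -/
def isChild (u v : V) : Prop := T.parent u = v ∧ u ≠ v

/-- A leaf of `T` is a vertex with no children. -/
def isLeaf (v : V) : Prop := ∀ u : V, T.parent u = v → u = v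

/-- An internal vertex of `T` is a vertex which is not a leaf. -/
def isInternal (v : V) : Prop := ¬ T.isLeaf v

instance : DecidablePred T.isLeaf := fun v =>
  decidable_of_iff (∀ u : V, T.parent u = v → u = v) Iff.rfl

instance : DecidablePred T.isInternal := fun v =>
  inferInstanceAs (Decidable (¬ T.isLeaf v))

/-- `u` is a (weak) descendant of `v`, i.e. `v` lies on the path from `u` to the root. -/
def desc (u v : V) : Prop := ∃ k : ℕ, T.parent^[k] u = v

/-- `u` is a strict descendant of `v`. -/
def strictDesc (u v : V) : Prop := T.desc u v ∧ u ≠ v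

/-- `u` and `v` are adjacent vertices of `T`. -/
def adjacent (u v : V) : Prop := T.isChild u v ∨ T.isChild v u

instance : DecidableRel T.isChild := fun u v =>
  decidable_of_iff (T.parent u = v ∧ u ≠ v) Iff.rfl

instance : DecidableRel T.adjacent := fun u v =>
  inferInstanceAs (Decidable (T.isChild u v ∨ T.isChild v u))

/-- The set of edges (each edge being labelled by its endpoint farther from the root)
on the path from `l` up to the root. -/
def upEdges (l : V) : Set V := {u : V | u ≠ T.root ∧ T.desc l u}

/-- The edge set of the unique path in `T` joining the two members of an unordered
pair of vertices (edges are labelled by their endpoint farther from the root). -/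
def pathEdges : Sym2 V → Set V :=
  Sym2.lift ⟨fun l₁ l₂ => symmDiff (T.upEdges l₁) (T.upEdges l₂), fun _ _ => symmDiff_comm _ _⟩

/-- `v` is the lowest common ancestor of `l₁` and `l₂`: it is an ancestor of both, and it
descends from every common ancestor.  Equivalently, `v` is the unique vertex of the path
from `l₁` to `l₂` which is an ancestor of every vertex of that path. -/
def isLCA (l₁ l₂ v : V) : Prop :=
  T.desc l₁ v ∧ T.desc l₂ v ∧ ∀ w : V, T.desc l₁ w → T.desc l₂ w → T.desc v w

/-- `v` is the top vertex of the path joining the two members of the unordered pair `p`. -/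
def isTopOf (v : V) : Sym2 V → Prop :=
  Sym2.lift ⟨fun l₁ l₂ => T.isLCA l₁ l₂ v, fun a b => by
    simp only [eq_iff_iff, isLCA]
    constructor <;> rintro ⟨h₁, h₂, h₃⟩ <;> exact ⟨h₂, h₁, fun w hw₁ hw₂ => h₃ w hw₂ hw₁⟩⟩

end RBT

/-- A system of disjoint paths in `T`: a finite set of unordered pairs of distinct leaves,
such that the unique paths in `T` joining the pairs are pairwise edge-disjoint. -/
structure PathSystem {V : Type} [Fintype V] [DecidableEq V] (T : RBT V) : Type where
  pairs : Finset (Sym2 V)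
  leaf_mem : ∀ p ∈ pairs, ∀ l ∈ p, T.isLeaf l
  not_diag : ∀ p ∈ pairs, ¬ p.IsDiag
  edge_disjoint : (pairs : Set (Sym2 V)).Pairwise fun p q =>
    Disjoint (T.pathEdges p) (T.pathEdges q)

namespace PathSystem

variable {V : Type} [Fintype V] [DecidableEq V] {T : RBT V}

/-- The top-set of a system of disjoint paths: the set of top vertices of its paths. -/
def topSet (P : PathSystem T) : Set V := {v : V | ∃ p ∈ P.pairs, T.isTopOf v p}

/-- The top-vector of a system of disjoint paths, as a point of `ℝ^{Int(T)}`: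
the 0/1 indicator vector of its top-set. -/
noncomputable def topVector (P : PathSystem T) : {v : V // T.isInternal v} → ℝ := fun v =>
  Set.indicator P.topSet (fun _ => (1 : ℝ)) (v : V)

end PathSystem

namespace RBT

variable {V : Type} [Fintype V] [DecidableEq V] (T : RBT V)

/-- The set of top-vectors of all systems of disjoint paths in `T`. -/
noncomputable def topVectors : Set ({v : V // T.isInternal v} → ℝ) :=
  Set.range fun P : PathSystem T => P.topVector

/-- The CFN-MC polytope `R_T ⊆ ℝ^{Int(T)}`: the convex hull of the top-vectors of all
systems of disjoint paths in `T`. -/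
noncomputable def cfnmcPolytope : Set ({v : V // T.isInternal v} → ℝ) :=
  convexHull ℝ T.topVectors

end RBT

set_option linter.unusedSectionVars false

namespace RBTAux

open RBT

variable {V : Type} [Fintype V] [DecidableEq V] (T : RBT V)

/-- The depth of a vertex: distance to the root. -/
def depth (v : V) : ℕ := Nat.find (T.reaches v)

lemma depth_spec (v : V) : T.parent^[depth T v] v = T.root := Nat.find_spec (T.reaches v)

lemma depth_min {v : V} {k : ℕ} (h : k < depth T v) : T.parent^[k] v ≠ T.root :=
  Nat.find_min (T.reaches v) h

lemma depth_root : depth T T.root = 0 :=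
  Nat.le_zero.mp (Nat.find_le (by simp))

lemma eq_root_of_parent_eq {v : V} (h : T.parent v = v) : v = T.root := by
  obtain ⟨k, hk⟩ := T.reaches v
  rw [Function.iterate_fixed h k] at hk
  exact hk

lemma root_iterate (k : ℕ) : T.parent^[k] T.root = T.root :=
  Function.iterate_fixed T.parent_root k

lemma depth_eq_zero_iff {v : V} : depth T v = 0 ↔ v = T.root := by
  constructor
  · intro h
    have := depth_spec T v
    rwa [h] at this
  · rintro rfl; exact depth_root T

lemma depth_parent {v : V} (h : v ≠ T.root) : depth T (T.parent v) + 1 = depth T v := by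
  have hd : depth T v ≠ 0 := fun h0 => h ((depth_eq_zero_iff T).mp h0)
  obtain ⟨d, hdd⟩ : ∃ d, depth T v = d + 1 := ⟨depth T v - 1, (Nat.succ_pred_eq_of_ne_zero hd).symm⟩
  have h1 : T.parent^[d] (T.parent v) = T.root := by
    have := depth_spec T v
    rwa [hdd, Function.iterate_succ_apply] at this
  have hle : depth T (T.parent v) ≤ d := Nat.find_le h1
  have hge : d ≤ depth T (T.parent v) := by
    by_contra hlt
    push_neg at hlt
    have h2 : T.parent^[depth T (T.parent v) + 1] v = T.root := by
      rw [Function.iterate_succ_apply]; exact depth_spec T (T.parent v)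
    exact depth_min T (by omega) h2
  omega

lemma depth_parent_le (v : V) : depth T (T.parent v) ≤ depth T v := by
  by_cases h : v = T.root
  · subst h; rw [T.parent_root]
  · have := depth_parent T h; omega

lemma depth_iterate_le (k : ℕ) (u : V) : depth T (T.parent^[k] u) ≤ depth T u := by
  induction k generalizing u with
  | zero => simp
  | succ n ih =>
    calc depth T (T.parent^[n+1] u) = depth T (T.parent^[n] (T.parent u)) := by
          rw [Function.iterate_succ_apply]
      _ ≤ depth T (T.parent u) := ih (T.parent u)
      _ ≤ depth T u := depth_parent_le T u

lemma depth_lt_card (v : V) : depth T v < Fintype.card V := by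
  have hinj : Function.Injective (fun i : Fin (depth T v + 1) => T.parent^[i.1] v) := by
    intro i j hij
    simp only at hij
    have key : ∀ i : Fin (depth T v + 1), depth T (T.parent^[i.1] v) = depth T v - i.1 := by
      intro ⟨i, hi⟩
      induction i with
      | zero => simp
      | succ n ihn =>
        have hn : n < depth T v + 1 := by omega
        have hnr : T.parent^[n] v ≠ T.root := depth_min T (by omega)
        have h1 : depth T (T.parent (T.parent^[n] v)) + 1 = depth T (T.parent^[n] v) :=
          depth_parent T hnr
        have h2 := ihn hn
        simp only at h2 ⊢
        rw [Function.iterate_succ_apply']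
        omega
    have h1 := key i
    have h2 := key j
    rw [hij] at h1
    have : i.1 = j.1 := by
      have hi := i.2; have hj := j.2; omega
    exact Fin.ext this
  have := Fintype.card_le_of_injective _ hinj
  simpa using this

/-- The children of a vertex, as a finset. -/
def children (v : V) : Finset V := Finset.univ.filter fun u => T.parent u = v ∧ u ≠ v

lemma mem_children {u v : V} : u ∈ children T v ↔ T.isChild u v := by
  simp [children, isChild]

lemma isLeaf_iff_children {v : V} : T.isLeaf v ↔ children T v = ∅ := by
  constructor
  · intro h
    ext u
    simp only [mem_children, Finset.notMem_empty, iff_false]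
    rintro ⟨h1, h2⟩
    exact h2 (h u h1)
  · intro h u hu
    by_contra hne
    have : u ∈ children T v := (mem_children T).mpr ⟨hu, hne⟩
    rw [h] at this
    exact absurd this (Finset.notMem_empty u)

lemma children_card (v : V) : (children T v).card = 0 ∨ (children T v).card = 2 := by
  have := T.binary v
  have hc : Nat.card {u : V // T.parent u = v ∧ u ≠ v} = (children T v).card := by
    rw [Nat.card_eq_fintype_card, Fintype.card_subtype]
    rfl
  rw [hc] at this
  exact this

lemma exists_two_children {v : V} (hv : T.isInternal v) :
    ∃ c₁ c₂ : V, c₁ ≠ c₂ ∧ children T v = {c₁, c₂} := by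
  have hne : children T v ≠ ∅ := fun h => hv ((isLeaf_iff_children T).mpr h)
  have hcard : (children T v).card = 2 := by
    rcases children_card T v with h | h
    · exact absurd (Finset.card_eq_zero.mp h) hne
    · exact h
  obtain ⟨c₁, c₂, hne', heq⟩ := Finset.card_eq_two.mp hcard
  exact ⟨c₁, c₂, hne', heq⟩

lemma desc_refl (v : V) : T.desc v v := ⟨0, rfl⟩

lemma desc_trans {u v w : V} (h1 : T.desc u v) (h2 : T.desc v w) : T.desc u w := by
  obtain ⟨k, hk⟩ := h1
  obtain ⟨l, hl⟩ := h2
  exact ⟨l + k, by rw [Function.iterate_add_apply, hk, hl]⟩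

lemma desc_root (v : V) : T.desc v T.root := T.reaches v

lemma child_strictDesc {c v : V} (h : T.isChild c v) : T.strictDesc c v :=
  ⟨⟨1, by simpa using h.1⟩, h.2⟩

lemma depth_lt_of_strictDesc {u v : V} (h : T.desc u v) (hne : u ≠ v) :
    depth T v < depth T u := by
  obtain ⟨k, hk⟩ := h
  have hur : u ≠ T.root := by
    rintro rfl
    rw [root_iterate] at hk
    exact hne hk
  obtain ⟨k', hk'⟩ : ∃ k', k = k' + 1 := by
    cases k with
    | zero => exact absurd (by simpa using hk) hne
    | succ n => exact ⟨n, rfl⟩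
  subst hk'
  rw [Function.iterate_succ_apply] at hk
  have h1 : depth T v ≤ depth T (T.parent u) := hk ▸ depth_iterate_le T k' (T.parent u)
  have h2 := depth_parent T hur
  omega

lemma desc_antisymm {u v : V} (h1 : T.desc u v) (h2 : T.desc v u) : u = v := by
  by_contra hne
  have a1 := depth_lt_of_strictDesc T h1 hne
  have a2 := depth_lt_of_strictDesc T h2 (Ne.symm hne)
  omega

lemma anc_chain {l u w : V} (h1 : T.desc l u) (h2 : T.desc l w) :
    T.desc u w ∨ T.desc w u := by
  obtain ⟨a, ha⟩ := h1
  obtain ⟨b, hb⟩ := h2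
  rcases le_total a b with h | h
  · left
    refine ⟨b - a, ?_⟩
    rw [← ha, ← Function.iterate_add_apply]
    rw [Nat.sub_add_cancel h, hb]
  · right
    refine ⟨a - b, ?_⟩
    rw [← hb, ← Function.iterate_add_apply]
    rw [Nat.sub_add_cancel h, ha]

lemma strictDesc_child {w v : V} (h : T.strictDesc w v) :
    ∃ c : V, T.isChild c v ∧ T.desc w c := by
  obtain ⟨⟨k, hk⟩, hne⟩ := h
  have hex : ∃ n, T.parent^[n] w = v := ⟨k, hk⟩
  set k₀ := Nat.find hex with hk₀
  have hspec : T.parent^[k₀] w = v := Nat.find_spec hex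
  have hk0ne : k₀ ≠ 0 := by
    intro h0
    rw [h0] at hspec
    exact hne hspec
  obtain ⟨n, hn⟩ : ∃ n, k₀ = n + 1 := ⟨k₀ - 1, (Nat.succ_pred_eq_of_ne_zero hk0ne).symm⟩
  refine ⟨T.parent^[n] w, ⟨?_, ?_⟩, ⟨n, rfl⟩⟩
  · have h1 : T.parent^[n + 1] w = v := by rw [← hn]; exact hspec
    rw [Function.iterate_succ_apply'] at h1
    exact h1
  · intro heq
    have : T.parent^[n] w = v := heq
    exact Nat.find_min hex (by omega : n < k₀) this

lemma child_ne_root {c v : V} (h : T.isChild c v) : c ≠ T.root := by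
  rintro rfl
  exact h.2 (h.1.symm.trans T.parent_root).symm

lemma depth_child {c v : V} (h : T.isChild c v) : depth T c = depth T v + 1 := by
  have hcr : c ≠ T.root := child_ne_root T h
  have := depth_parent T hcr
  rw [h.1] at this
  omega

lemma children_eq_of_comparable {c c' v : V} (h : T.isChild c v) (h' : T.isChild c' v)
    (hd : T.desc c c' ∨ T.desc c' c) : c = c' := by
  have d1 := depth_child T h
  have d2 := depth_child T h'
  rcases hd with hd | hd
  · by_contra hne
    have := depth_lt_of_strictDesc T hd hne
    omega
  · by_contra hne
    have := depth_lt_of_strictDesc T hd (Ne.symm hne)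
    omega

lemma subtree_disjoint {c c' v w : V} (h : T.isChild c v) (h' : T.isChild c' v)
    (hne : c ≠ c') (hw : T.desc w c) : ¬ T.desc w c' := by
  intro hw'
  exact hne (children_eq_of_comparable T h h' (anc_chain T hw hw'))

lemma leaf_desc {l u : V} (hl : T.isLeaf l) (h : T.desc u l) : u = l := by
  obtain ⟨k, hk⟩ := h
  induction k generalizing u with
  | zero => exact hk
  | succ n ih =>
    rw [Function.iterate_succ_apply'] at hk
    exact ih (hl _ hk)

lemma desc_of_child {l c v : V} (h : T.desc l c) (hc : T.isChild c v) : T.desc l v :=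
  desc_trans T h (child_strictDesc T hc).1

lemma isTopOf_mk {a b v : V} : T.isTopOf v s(a, b) ↔ T.isLCA a b v := Iff.rfl

lemma top_unique {p : Sym2 V} {v w : V} (h1 : T.isTopOf v p) (h2 : T.isTopOf w p) : v = w := by
  induction p using Sym2.inductionOn with
  | hf a b =>
    obtain ⟨ha, hb, hmin⟩ := h1
    obtain ⟨ha', hb', hmin'⟩ := h2
    exact desc_antisymm T (hmin w ha' hb') (hmin' v ha hb)

lemma lca_ne_leaf {l₁ l₂ v : V} (hne : l₁ ≠ l₂) (hl₁ : T.isLeaf l₁) (hl₂ : T.isLeaf l₂)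
    (h : T.isLCA l₁ l₂ v) : v ≠ l₁ ∧ v ≠ l₂ := by
  constructor
  · rintro rfl
    exact hne (leaf_desc T hl₁ h.2.1).symm
  · rintro rfl
    exact hne (leaf_desc T hl₂ h.1)

/-- The two leaves of a path lie under distinct children of its top. -/
lemma lca_children {l₁ l₂ v : V} (hne : l₁ ≠ l₂) (hl₁ : T.isLeaf l₁) (hl₂ : T.isLeaf l₂)
    (h : T.isLCA l₁ l₂ v) :
    ∃ c₁ c₂ : V, T.isChild c₁ v ∧ T.isChild c₂ v ∧ c₁ ≠ c₂ ∧ T.desc l₁ c₁ ∧ T.desc l₂ c₂ := by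
  have hv1 : v ≠ l₁ := (lca_ne_leaf T hne hl₁ hl₂ h).1
  have hv2 : v ≠ l₂ := (lca_ne_leaf T hne hl₁ hl₂ h).2
  obtain ⟨c₁, hc₁, hd₁⟩ := strictDesc_child T ⟨h.1, Ne.symm hv1⟩
  obtain ⟨c₂, hc₂, hd₂⟩ := strictDesc_child T ⟨h.2.1, Ne.symm hv2⟩
  refine ⟨c₁, c₂, hc₁, hc₂, ?_, hd₁, hd₂⟩
  rintro rfl
  have hdc : T.desc v c₁ := h.2.2 c₁ hd₁ hd₂
  have := desc_antisymm T hdc (child_strictDesc T hc₁).1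
  exact hc₁.2 this.symm

lemma lca_internal {l₁ l₂ v : V} (hne : l₁ ≠ l₂) (hl₁ : T.isLeaf l₁) (hl₂ : T.isLeaf l₂)
    (h : T.isLCA l₁ l₂ v) : T.isInternal v := by
  obtain ⟨c₁, _, hc₁, _⟩ := lca_children T hne hl₁ hl₂ h
  intro hleaf
  exact hc₁.2 (hleaf _ hc₁.1)

/-- The set of edges (labelled by lower endpoints) on the chain from `l` up to `v`,
excluding the trivial case. -/
def chainE (l v : V) : Set V := {w | T.desc l w ∧ T.strictDesc w v}

lemma root_not_strictDesc {v : V} : ¬ T.strictDesc T.root v := by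
  rintro ⟨⟨k, hk⟩, hne⟩
  rw [root_iterate] at hk
  exact hne hk

lemma pathEdges_char {l₁ l₂ v : V} (h : T.isLCA l₁ l₂ v) :
    T.pathEdges s(l₁, l₂) = chainE T l₁ v ∪ chainE T l₂ v := by
  ext w
  have hchar : T.pathEdges s(l₁, l₂) = symmDiff (T.upEdges l₁) (T.upEdges l₂) := rfl
  rw [hchar]
  simp only [Set.mem_union, Set.mem_symmDiff]
  constructor
  · rintro (⟨⟨hwr, hd1⟩, hn2⟩ | ⟨⟨hwr, hd2⟩, hn1⟩)
    · left
      have hnd2 : ¬ T.desc l₂ w := fun hd => hn2 ⟨hwr, hd⟩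
      refine ⟨hd1, ?_, ?_⟩
      · rcases anc_chain T hd1 h.1 with hc | hc
        · exact hc
        · exact absurd (desc_trans T h.2.1 hc) hnd2
      · rintro rfl
        exact hnd2 h.2.1
    · right
      have hnd1 : ¬ T.desc l₁ w := fun hd => hn1 ⟨hwr, hd⟩
      refine ⟨hd2, ?_, ?_⟩
      · rcases anc_chain T hd2 h.2.1 with hc | hc
        · exact hc
        · exact absurd (desc_trans T h.1 hc) hnd1
      · rintro rfl
        exact hnd1 h.1
  · rintro (⟨hd1, hsd⟩ | ⟨hd2, hsd⟩)
    · have hwr : w ≠ T.root := by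
        rintro rfl
        exact root_not_strictDesc T hsd
      have hnd2 : ¬ T.desc l₂ w := by
        intro hd
        have := h.2.2 w hd1 hd
        exact hsd.2 (desc_antisymm T hsd.1 this)
      exact Or.inl ⟨⟨hwr, hd1⟩, fun hc => hnd2 hc.2⟩
    · have hwr : w ≠ T.root := by
        rintro rfl
        exact root_not_strictDesc T hsd
      have hnd1 : ¬ T.desc l₁ w := by
        intro hd
        have := h.2.2 w hd hd2
        exact hsd.2 (desc_antisymm T hsd.1 this)
      exact Or.inr ⟨⟨hwr, hd2⟩, fun hc => hnd1 hc.2⟩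

lemma chainE_subset_strict {l v : V} : chainE T l v ⊆ {w | T.strictDesc w v} :=
  fun _ hw => hw.2

lemma pathEdges_subset {l₁ l₂ v : V} (h : T.isLCA l₁ l₂ v) :
    T.pathEdges s(l₁, l₂) ⊆ {w | T.strictDesc w v} := by
  rw [pathEdges_char T h]
  rintro w (hw | hw) <;> exact hw.2

lemma chainE_split {l c v : V} (hc : T.isChild c v) (hl : T.desc l c) :
    chainE T l v = chainE T l c ∪ {c} := by
  ext w
  simp only [Set.mem_union, Set.mem_singleton_iff]
  constructor
  · rintro ⟨hdl, hsd⟩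
    obtain ⟨c', hc', hdc'⟩ := strictDesc_child T hsd
    have hcc : c' = c :=
      children_eq_of_comparable T hc' hc (anc_chain T (desc_trans T hdl hdc') hl)
    rw [hcc] at hdc'
    by_cases hwc : w = c
    · exact Or.inr hwc
    · exact Or.inl ⟨hdl, hdc', hwc⟩
  · rintro (⟨hdl, hsd⟩ | rfl)
    · refine ⟨hdl, desc_trans T hsd.1 (child_strictDesc T hc).1, ?_⟩
      rintro rfl
      exact hc.2 (desc_antisymm T (child_strictDesc T hc).1 hsd.1)
    · exact ⟨hl, child_strictDesc T hc⟩

lemma chainE_subset_desc {l c : V} : chainE T l c ∪ {c} ⊆ {w | T.desc w c} := by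
  rintro w (hw | rfl)
  · exact hw.2.1
  · exact desc_refl T _

lemma strictDesc_of_desc_strict {w u v : V} (h1 : T.desc w u) (h2 : T.strictDesc u v) :
    T.strictDesc w v := by
  refine ⟨desc_trans T h1 h2.1, ?_⟩
  rintro rfl
  exact h2.2 (desc_antisymm T h2.1 h1)

lemma depth_child_mem {u v : V} (hu : u ∈ children T v) : depth T u = depth T v + 1 :=
  depth_child T ((mem_children T).mp hu)

/-- Induction over the tree, from the leaves up. -/
lemma children_induction {P : V → Prop}
    (h : ∀ v : V, (∀ u ∈ children T v, P u) → P v) : ∀ v, P v := by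
  have key : ∀ n : ℕ, ∀ v : V, Fintype.card V - depth T v ≤ n → P v := by
    intro n
    induction n with
    | zero =>
      intro v hv
      have := depth_lt_card T v
      omega
    | succ n ih =>
      intro v hv
      apply h
      intro u hu
      apply ih
      have := depth_child_mem T hu
      have := depth_lt_card T v
      omega
  intro v
  exact key (Fintype.card V - depth T v) v le_rfl

/-- The integer capacity function. -/
def aZ (m : ℤ) (z : V → ℤ) (v : V) : ℤ :=
  if T.isLeaf v then m
  else min (m - z v) ((∑ u ∈ (children T v).attach, aZ m z u.1) - 2 * z v)
termination_by Fintype.card V - depth T v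
decreasing_by
  have := depth_child_mem T u.2
  have := depth_lt_card T v
  omega

/-- The real capacity function. -/
noncomputable def aR (m : ℝ) (x : V → ℝ) (v : V) : ℝ :=
  if T.isLeaf v then m
  else min (m - x v) ((∑ u ∈ (children T v).attach, aR m x u.1) - 2 * x v)
termination_by Fintype.card V - depth T v
decreasing_by
  have := depth_child_mem T u.2
  have := depth_lt_card T v
  omega

lemma aZ_leaf {m : ℤ} {z : V → ℤ} {v : V} (hv : T.isLeaf v) : aZ T m z v = m := by
  rw [aZ, if_pos hv]

lemma aR_leaf {m : ℝ} {x : V → ℝ} {v : V} (hv : T.isLeaf v) : aR T m x v = m := by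
  rw [aR, if_pos hv]

lemma aZ_internal {m : ℤ} {z : V → ℤ} {v c₁ c₂ : V} (hv : T.isInternal v)
    (hne : c₁ ≠ c₂) (hch : children T v = {c₁, c₂}) :
    aZ T m z v = min (m - z v) (aZ T m z c₁ + aZ T m z c₂ - 2 * z v) := by
  rw [aZ, if_neg hv]
  congr 1
  rw [Finset.sum_attach (children T v) (fun u => aZ T m z u), hch,
    Finset.sum_pair hne]

lemma aR_internal {m : ℝ} {x : V → ℝ} {v c₁ c₂ : V} (hv : T.isInternal v)
    (hne : c₁ ≠ c₂) (hch : children T v = {c₁, c₂}) :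
    aR T m x v = min (m - x v) (aR T m x c₁ + aR T m x c₂ - 2 * x v) := by
  rw [aR, if_neg hv]
  congr 1
  rw [Finset.sum_attach (children T v) (fun u => aR T m x u), hch,
    Finset.sum_pair hne]

lemma aR_cast (m : ℤ) (z : V → ℤ) (v : V) :
    aR T (m : ℝ) (fun u => (z u : ℝ)) v = ((aZ T m z v : ℤ) : ℝ) := by
  induction v using children_induction T with
  | h v ih =>
    by_cases hv : T.isLeaf v
    · rw [aR_leaf T hv, aZ_leaf T hv]
    · obtain ⟨c₁, c₂, hne, hch⟩ := exists_two_children T hv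
      rw [aR_internal T hv hne hch, aZ_internal T hv hne hch]
      have h1 := ih c₁ (by rw [hch]; simp)
      have h2 := ih c₂ (by rw [hch]; simp)
      rw [h1, h2]
      push_cast
      rfl

/-- Homogeneity of the real capacity function. -/
lemma aR_smul (s m : ℝ) (hs : 0 ≤ s) (x : V → ℝ) (v : V) :
    aR T (s * m) (fun u => s * x u) v = s * aR T m x v := by
  induction v using children_induction T with
  | h v ih =>
    by_cases hv : T.isLeaf v
    · rw [aR_leaf T hv, aR_leaf T hv]
    · obtain ⟨c₁, c₂, hne, hch⟩ := exists_two_children T hv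
      rw [aR_internal T hv hne hch, aR_internal T hv hne hch]
      have h1 := ih c₁ (by rw [hch]; simp)
      have h2 := ih c₂ (by rw [hch]; simp)
      rw [h1, h2, mul_min_of_nonneg _ _ hs]
      ring_nf

/-- Concavity of the real capacity function. -/
lemma aR_concave (m : ℝ) (x y : V → ℝ) (a b : ℝ) (ha : 0 ≤ a) (hb : 0 ≤ b)
    (hab : a + b = 1) (v : V) :
    a * aR T m x v + b * aR T m y v ≤ aR T m (fun u => a * x u + b * y u) v := by
  induction v using children_induction T with
  | h v ih =>
    by_cases hv : T.isLeaf v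
    · rw [aR_leaf T hv, aR_leaf T hv, aR_leaf T hv]
      have : a * m + b * m = m := by rw [← add_mul, hab, one_mul]
      linarith
    · obtain ⟨c₁, c₂, hne, hch⟩ := exists_two_children T hv
      rw [aR_internal T hv hne hch, aR_internal T hv hne hch, aR_internal T hv hne hch]
      have h1 := ih c₁ (by rw [hch]; simp)
      have h2 := ih c₂ (by rw [hch]; simp)
      apply le_min
      · calc a * min (m - x v) (aR T m x c₁ + aR T m x c₂ - 2 * x v)
              + b * min (m - y v) (aR T m y c₁ + aR T m y c₂ - 2 * y v)
            ≤ a * (m - x v) + b * (m - y v) := by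
              have q1 := min_le_left (m - x v) (aR T m x c₁ + aR T m x c₂ - 2 * x v)
              have q2 := min_le_left (m - y v) (aR T m y c₁ + aR T m y c₂ - 2 * y v)
              nlinarith
          _ = m - (a * x v + b * y v) := by linear_combination m * hab
      · calc a * min (m - x v) (aR T m x c₁ + aR T m x c₂ - 2 * x v)
              + b * min (m - y v) (aR T m y c₁ + aR T m y c₂ - 2 * y v)
            ≤ a * (aR T m x c₁ + aR T m x c₂ - 2 * x v)
              + b * (aR T m y c₁ + aR T m y c₂ - 2 * y v) := by
              have q1 := min_le_right (m - x v) (aR T m x c₁ + aR T m x c₂ - 2 * x v)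
              have q2 := min_le_right (m - y v) (aR T m y c₁ + aR T m y c₂ - 2 * y v)
              nlinarith
          _ ≤ aR T m (fun u => a * x u + b * y u) c₁ + aR T m (fun u => a * x u + b * y u) c₂
              - 2 * (a * x v + b * y v) := by nlinarith [h1, h2]

lemma children_eq_pair {v c₁ c₂ : V} (h1 : T.isChild c₁ v) (h2 : T.isChild c₂ v)
    (hne : c₁ ≠ c₂) : children T v = {c₁, c₂} := by
  have hsub : ({c₁, c₂} : Finset V) ⊆ children T v := by
    intro x hx
    rcases Finset.mem_insert.mp hx with rfl | hx
    · exact (mem_children T).mpr h1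
    · rw [Finset.mem_singleton.mp hx]
      exact (mem_children T).mpr h2
  have hcard2 : ({c₁, c₂} : Finset V).card = 2 := Finset.card_pair hne
  have hc : (children T v).card = 2 := by
    rcases children_card T v with h | h
    · exfalso
      have : c₁ ∈ children T v := (mem_children T).mpr h1
      have := Finset.card_eq_zero.mp h
      simp [this] at *
    · exact h
  exact (Finset.eq_of_subset_of_card_le hsub (by omega)).symm

lemma pair_destruct (p : Sym2 V) : ∃ a b : V, p = s(a, b) := by
  induction p using Sym2.inductionOn with
  | hf a b => exact ⟨a, b, rfl⟩

lemma topSet_internal (P : PathSystem T) {v : V} (hv : v ∈ P.topSet) : T.isInternal v := by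
  obtain ⟨p, hp, htop⟩ := hv
  obtain ⟨l₁, l₂, rfl⟩ := pair_destruct p
  have hne : l₁ ≠ l₂ := fun h => P.not_diag _ hp (by rw [h]; exact Sym2.isDiag_iff_proj_eq.mpr rfl)
  exact lca_internal T hne (P.leaf_mem _ hp l₁ (by simp)) (P.leaf_mem _ hp l₂ (by simp)) htop

/-- The subtree of `c` can absorb a route from above, avoiding the top-set `S`. -/
def absorbs (S : Set V) (c : V) : Prop :=
  ∃ l : V, T.isLeaf l ∧ T.desc l c ∧ ∀ u : V, T.desc l u → T.desc u c → u ∉ S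

/-- Key necessity lemma: for any system of disjoint paths, each child subtree of a
top vertex contains a chain down to a leaf avoiding the top-set. -/
lemma necessity (P : PathSystem T) {v c : V} (hv : v ∈ P.topSet) (hc : T.isChild c v) :
    absorbs T P.topSet c := by
  obtain ⟨p, hp, htop⟩ := hv
  obtain ⟨l₁, l₂, rfl⟩ := pair_destruct p
  have hne : l₁ ≠ l₂ := fun h => P.not_diag _ hp (by rw [h]; exact Sym2.isDiag_iff_proj_eq.mpr rfl)
  have hl₁ : T.isLeaf l₁ := P.leaf_mem _ hp l₁ (by simp)
  have hl₂ : T.isLeaf l₂ := P.leaf_mem _ hp l₂ (by simp)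
  obtain ⟨c₁, c₂, hc₁, hc₂, hcc, hd₁, hd₂⟩ := lca_children T hne hl₁ hl₂ htop
  -- chains up from the two leaves avoid the top-set
  have key : ∀ u : V, T.desc l₁ u ∨ T.desc l₂ u → T.strictDesc u v → u ∉ P.topSet := by
    intro u hlu husv huS
    obtain ⟨q, hq, htopq⟩ := huS
    obtain ⟨k₁, k₂, rfl⟩ := pair_destruct q
    have hkne : k₁ ≠ k₂ := fun h => P.not_diag _ hq (by rw [h]; exact Sym2.isDiag_iff_proj_eq.mpr rfl)
    have hk₁ : T.isLeaf k₁ := P.leaf_mem _ hq k₁ (by simp)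
    have hk₂ : T.isLeaf k₂ := P.leaf_mem _ hq k₂ (by simp)
    have hu_int : T.isInternal u := lca_internal T hkne hk₁ hk₂ htopq
    have hpq : s(l₁, l₂) ≠ s(k₁, k₂) := by
      intro heq
      rw [heq] at htop
      exact husv.2 (top_unique T htopq htop)
    -- the leaf above `u` on the chain
    obtain ⟨l, hlleaf, hldesc, hlmem⟩ : ∃ l, T.isLeaf l ∧ T.desc l u ∧
        (T.desc l₁ u → l = l₁) ∧ (¬ T.desc l₁ u → l = l₂) := by
      by_cases h : T.desc l₁ u
      · exact ⟨l₁, hl₁, h, fun _ => rfl, fun hcon => absurd h hcon⟩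
      · rcases hlu with h' | h'
        · exact absurd h' h
        · exact ⟨l₂, hl₂, h', fun hcon => absurd hcon h, fun _ => rfl⟩
    have hlne : l ≠ u := fun he => hu_int (he ▸ hlleaf)
    obtain ⟨d, hdchild, hldd⟩ := strictDesc_child T ⟨hldesc, hlne⟩
    have hsdv : T.strictDesc d v :=
      strictDesc_of_desc_strict T (child_strictDesc T hdchild).1 husv
    -- d is an edge of the path p
    have hdp : d ∈ T.pathEdges s(l₁, l₂) := by
      rw [pathEdges_char T htop]
      by_cases h : T.desc l₁ u
      · have := hlmem.1 h
        subst this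
        exact Or.inl ⟨hldd, hsdv⟩
      · have := hlmem.2 h
        subst this
        exact Or.inr ⟨hldd, hsdv⟩
    -- d is an edge of the path q
    have hdq : d ∈ T.pathEdges s(k₁, k₂) := by
      obtain ⟨e₁, e₂, he₁, he₂, hee, hk₁d, hk₂d⟩ := lca_children T hkne hk₁ hk₂ htopq
      have hdmem : d ∈ children T u := (mem_children T).mpr hdchild
      rw [children_eq_pair T he₁ he₂ hee] at hdmem
      rw [pathEdges_char T htopq]
      rcases Finset.mem_insert.mp hdmem with rfl | hdm
      · exact Or.inl ⟨hk₁d, child_strictDesc T hdchild⟩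
      · rw [Finset.mem_singleton.mp hdm]
        exact Or.inr ⟨hk₂d, child_strictDesc T he₂⟩
    exact Set.disjoint_left.mp (P.edge_disjoint hp hq hpq) hdp hdq
  -- now pick the right child
  have hcmem : c ∈ children T v := (mem_children T).mpr hc
  rw [children_eq_pair T hc₁ hc₂ hcc] at hcmem
  rcases Finset.mem_insert.mp hcmem with rfl | hcm
  · exact ⟨l₁, hl₁, hd₁, fun u hlu hud =>
      key u (Or.inl hlu) (strictDesc_of_desc_strict T hud (child_strictDesc T hc₁))⟩
  · rw [Finset.mem_singleton.mp hcm]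
    exact ⟨l₂, hl₂, hd₂, fun u hlu hud =>
      key u (Or.inr hlu) (strictDesc_of_desc_strict T hud (child_strictDesc T hc₂))⟩

open Classical in
/-- Nonnegativity and the absorption bound for the capacity of an indicator vector. -/
lemma aR_indicator_bounds (P : PathSystem T) (w : V) :
    0 ≤ aR T 1 (Set.indicator P.topSet fun _ => 1) w ∧
      (absorbs T P.topSet w → 1 ≤ aR T 1 (Set.indicator P.topSet fun _ => 1) w) := by
  set x : V → ℝ := Set.indicator P.topSet fun _ => 1 with hxdef
  induction w using children_induction T with
  | h w ih =>
    by_cases hw : T.isLeaf w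
    · rw [aR_leaf T hw]; norm_num
    · obtain ⟨c₁, c₂, hne, hch⟩ := exists_two_children T hw
      have hm₁ : c₁ ∈ children T w := by rw [hch]; simp
      have hm₂ : c₂ ∈ children T w := by rw [hch]; simp
      rw [aR_internal T hw hne hch]
      by_cases hwS : w ∈ P.topSet
      · have hx1 : x w = 1 := Set.indicator_of_mem hwS _
        have habs₁ := necessity T P hwS ((mem_children T).mp hm₁)
        have habs₂ := necessity T P hwS ((mem_children T).mp hm₂)
        have g₁ := (ih c₁ hm₁).2 habs₁
        have g₂ := (ih c₂ hm₂).2 habs₂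
        constructor
        · apply le_min <;> rw [hx1] <;> linarith
        · rintro ⟨l, hl, hld, hfree⟩
          exact absurd hwS (hfree w hld (desc_refl T w))
      · have hx0 : x w = 0 := Set.indicator_of_notMem hwS _
        have g₁ := (ih c₁ hm₁).1
        have g₂ := (ih c₂ hm₂).1
        constructor
        · apply le_min <;> rw [hx0] <;> linarith
        · rintro ⟨l, hl, hld, hfree⟩
          have hlw : l ≠ w := fun he => hw (he ▸ hl)
          obtain ⟨d, hdchild, hldd⟩ := strictDesc_child T ⟨hld, hlw⟩
          have habs : absorbs T P.topSet d :=
            ⟨l, hl, hldd, fun u hlu hud =>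
              hfree u hlu (desc_trans T hud (child_strictDesc T hdchild).1)⟩
          have hdmem : d ∈ children T w := (mem_children T).mpr hdchild
          have hd12 : d = c₁ ∨ d = c₂ := by
            rw [hch] at hdmem
            rcases Finset.mem_insert.mp hdmem with h | h
            · exact Or.inl h
            · exact Or.inr (Finset.mem_singleton.mp h)
          rcases hd12 with rfl | rfl
          · have := (ih d hm₁).2 habs
            apply le_min <;> rw [hx0] <;> linarith
          · have := (ih d hm₂).2 habs
            apply le_min <;> rw [hx0] <;> linarith

/-- Extension of a vector on internal vertices by zero. -/
def ext (x : {v : V // T.isInternal v} → ℝ) (v : V) : ℝ :=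
  if h : T.isInternal v then x ⟨v, h⟩ else 0

lemma ext_affine (x y : {v : V // T.isInternal v} → ℝ) (a b : ℝ) (v : V) :
    ext T (a • x + b • y) v = a * ext T x v + b * ext T y v := by
  unfold ext
  split_ifs <;> simp

/-- The constraint region. -/
def K : Set ({v : V // T.isInternal v} → ℝ) :=
  {x | ∀ v : V, T.isInternal v → 0 ≤ ext T x v ∧
    ∀ c ∈ children T v, ext T x v ≤ aR T 1 (ext T x) c}

lemma K_convex : Convex ℝ (K T) := by
  intro x hx y hy a b ha hb hab
  intro v hv
  have hxv := hx v hv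
  have hyv := hy v hv
  have heq : ext T (a • x + b • y) = fun u => a * ext T x u + b * ext T y u :=
    funext fun u => ext_affine T x y a b u
  constructor
  · rw [ext_affine]
    have := hxv.1; have := hyv.1
    positivity
  · intro c hc
    rw [ext_affine, heq]
    calc a * ext T x v + b * ext T y v
        ≤ a * aR T 1 (ext T x) c + b * aR T 1 (ext T y) c := by
          have h1 := hxv.2 c hc
          have h2 := hyv.2 c hc
          nlinarith
      _ ≤ aR T 1 (fun u => a * ext T x u + b * ext T y u) c :=
          aR_concave T 1 (ext T x) (ext T y) a b ha hb hab c

lemma ext_topVector (P : PathSystem T) :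
    ext T P.topVector = Set.indicator P.topSet fun _ => 1 := by
  funext v
  unfold ext
  split_ifs with h
  · rfl
  · rw [Set.indicator_of_notMem (fun hv => h (topSet_internal T P hv)) _]

lemma topVectors_subset_K : T.topVectors ⊆ K T := by
  rintro x ⟨P, rfl⟩
  intro v hv
  rw [ext_topVector]
  constructor
  · exact Set.indicator_nonneg (by norm_num) v
  · intro c hc
    have hb := aR_indicator_bounds T P c
    by_cases hvS : v ∈ P.topSet
    · rw [Set.indicator_of_mem hvS]
      exact hb.2 (necessity T P hvS ((mem_children T).mp hc))
    · rw [Set.indicator_of_notMem hvS]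
      exact hb.1

/-- Integer feasibility. -/
def Feas (m : ℤ) (z : V → ℤ) : Prop :=
  ∀ v : V, T.isInternal v → 0 ≤ z v ∧ ∀ c ∈ children T v, z v ≤ aZ T m z c

lemma aZ_le {m : ℤ} {z : V → ℤ} (hm : 0 ≤ m) (hF : Feas T m z) (v : V) :
    aZ T m z v ≤ m := by
  by_cases hv : T.isLeaf v
  · rw [aZ_leaf T hv]
  · obtain ⟨c₁, c₂, hne, hch⟩ := exists_two_children T hv
    rw [aZ_internal T hv hne hch]
    have h0 := (hF v hv).1
    have := min_le_left (m - z v) (aZ T m z c₁ + aZ T m z c₂ - 2 * z v)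
    omega

lemma aZ_nonneg {m : ℤ} {z : V → ℤ} (hm : 0 ≤ m) (hF : Feas T m z) (v : V) :
    0 ≤ aZ T m z v := by
  by_cases hv : T.isLeaf v
  · rw [aZ_leaf T hv]; exact hm
  · obtain ⟨c₁, c₂, hne, hch⟩ := exists_two_children T hv
    rw [aZ_internal T hv hne hch]
    have hm₁ : c₁ ∈ children T v := by rw [hch]; simp
    have hm₂ : c₂ ∈ children T v := by rw [hch]; simp
    have h1 := (hF v hv).2 c₁ hm₁
    have h2 := (hF v hv).2 c₂ hm₂
    have h3 := aZ_le T hm hF c₁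
    apply le_min <;> omega

open Classical in
/-- The main decomposition lemma, by induction on the subtree below `v`. -/
lemma decompose (m : ℕ) (z : V → ℤ) (hF : Feas T (m : ℤ) z) (v : V) :
    ∀ D : Finset (Fin m), (D.card : ℤ) ≤ aZ T (m : ℤ) z v →
    ∃ (PS : Fin m → Finset (Sym2 V)) (dl : Fin m → V),
      (∀ i, ∀ p ∈ PS i, (∀ l ∈ p, T.isLeaf l) ∧ ¬ p.IsDiag) ∧
      (∀ i, ∀ p ∈ PS i, ∃ u, T.desc u v ∧ T.isTopOf u p) ∧
      (∀ i, ((PS i : Set (Sym2 V)).Pairwise fun p q =>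
        Disjoint (T.pathEdges p) (T.pathEdges q))) ∧
      (∀ u, T.desc u v →
        ((Finset.univ.filter fun i : Fin m => ∃ p ∈ PS i, T.isTopOf u p).card : ℤ)
          = if T.isInternal u then z u else 0) ∧
      (∀ i ∈ D, T.isLeaf (dl i) ∧ T.desc (dl i) v ∧
        ∀ p ∈ PS i, Disjoint (chainE T (dl i) v) (T.pathEdges p)) := by
  induction v using children_induction T with
  | h v ih =>
  intro D hD
  by_cases hv : T.isLeaf v
  · refine ⟨fun _ => ∅, fun _ => v, by simp, by simp, by simp, ?_, ?_⟩
    · intro u hu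
      have huv : u = v := leaf_desc T hv hu
      subst huv
      rw [if_neg (by simpa [isInternal] using hv)]
      simp
    · intro i _
      refine ⟨hv, desc_refl T v, ?_⟩
      simp
  · -- internal vertex
    obtain ⟨c₁, c₂, hne, hch⟩ := exists_two_children T hv
    have hm₁ : c₁ ∈ children T v := by rw [hch]; simp
    have hm₂ : c₂ ∈ children T v := by rw [hch]; simp
    have hC₁ : T.isChild c₁ v := (mem_children T).mp hm₁
    have hC₂ : T.isChild c₂ v := (mem_children T).mp hm₂
    have hzv : 0 ≤ z v := (hF v hv).1
    have hza₁ : z v ≤ aZ T (m : ℤ) z c₁ := (hF v hv).2 c₁ hm₁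
    have hza₂ : z v ≤ aZ T (m : ℤ) z c₂ := (hF v hv).2 c₂ hm₂
    rw [aZ_internal T hv hne hch] at hD
    set a₁ := aZ T (m : ℤ) z c₁ with ha₁
    set a₂ := aZ T (m : ℤ) z c₂ with ha₂
    have hD1 : (D.card : ℤ) ≤ (m : ℤ) - z v := le_trans hD (min_le_left _ _)
    have hD2 : (D.card : ℤ) ≤ a₁ + a₂ - 2 * z v := le_trans hD (min_le_right _ _)
    -- choose the set A of layers hosting a top at v
    have hAex : ∃ A : Finset (Fin m), A ⊆ Finset.univ \ D ∧ A.card = (z v).toNat := by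
      apply Finset.exists_subset_card_eq
      rw [Finset.card_sdiff_of_subset (Finset.subset_univ D), Finset.card_univ, Fintype.card_fin]
      omega
    obtain ⟨A, hAsub, hAcard⟩ := hAex
    have hAD : ∀ i ∈ A, i ∉ D := fun i hi => (Finset.mem_sdiff.mp (hAsub hi)).2
    -- split the pass-through layers between the two children
    obtain ⟨D₁, hD₁sub, hD₁card⟩ :=
      Finset.exists_subset_card_eq (s := D) (n := min D.card (a₁ - z v).toNat) (min_le_left _ _)
    set D₂ := D \ D₁ with hD₂def
    have hD₂card : D₂.card = D.card - min D.card (a₁ - z v).toNat := by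
      rw [hD₂def, Finset.card_sdiff_of_subset hD₁sub, hD₁card]
    -- apply the induction hypothesis to the two children
    have hcall₁ : (((D₁ ∪ A).card : ℕ) : ℤ) ≤ a₁ := by
      have hdisj : Disjoint D₁ A := by
        rw [Finset.disjoint_left]
        intro i hi hiA
        exact hAD i hiA (hD₁sub hi)
      rw [Finset.card_union_of_disjoint hdisj, hD₁card, hAcard]
      omega
    have hcall₂ : (((D₂ ∪ A).card : ℕ) : ℤ) ≤ a₂ := by
      have hdisj : Disjoint D₂ A := by
        rw [Finset.disjoint_left]
        intro i hi hiA
        exact hAD i hiA (Finset.mem_sdiff.mp hi).1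
      rw [Finset.card_union_of_disjoint hdisj, hD₂card, hAcard]
      omega
    obtain ⟨PS₁, dl₁, h1ld, h1top, h1dis, h1cnt, h1dgl⟩ := ih c₁ hm₁ (D₁ ∪ A) hcall₁
    obtain ⟨PS₂, dl₂, h2ld, h2top, h2dis, h2cnt, h2dgl⟩ := ih c₂ hm₂ (D₂ ∪ A) hcall₂
    -- basic facts about edges of paths from the children systems
    have hsub₁ : ∀ i, ∀ p ∈ PS₁ i, T.pathEdges p ⊆ {w | T.strictDesc w c₁} := by
      intro i p hp
      obtain ⟨u, hu, htop⟩ := h1top i p hp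
      obtain ⟨x, y, rfl⟩ := pair_destruct p
      intro w hw
      have hwu : T.strictDesc w u := pathEdges_subset T htop hw
      refine ⟨desc_trans T hwu.1 hu, ?_⟩
      rintro rfl
      exact hwu.2 (desc_antisymm T hu hwu.1).symm
    have hsub₂ : ∀ i, ∀ p ∈ PS₂ i, T.pathEdges p ⊆ {w | T.strictDesc w c₂} := by
      intro i p hp
      obtain ⟨u, hu, htop⟩ := h2top i p hp
      obtain ⟨x, y, rfl⟩ := pair_destruct p
      intro w hw
      have hwu : T.strictDesc w u := pathEdges_subset T htop hw
      refine ⟨desc_trans T hwu.1 hu, ?_⟩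
      rintro rfl
      exact hwu.2 (desc_antisymm T hu hwu.1).symm
    have hSdis : Disjoint {w | T.desc w c₁} {w | T.desc w c₂} := by
      rw [Set.disjoint_left]
      intro w hw1 hw2
      exact subtree_disjoint T hC₁ hC₂ hne hw1 hw2
    -- data about the dangling leaves used to form new pairs topped at v
    have hdgl₁ : ∀ i ∈ D₁ ∪ A, T.isLeaf (dl₁ i) ∧ T.desc (dl₁ i) c₁ ∧
        ∀ p ∈ PS₁ i, Disjoint (chainE T (dl₁ i) c₁) (T.pathEdges p) := h1dgl
    have hdgl₂ : ∀ i ∈ D₂ ∪ A, T.isLeaf (dl₂ i) ∧ T.desc (dl₂ i) c₂ ∧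
        ∀ p ∈ PS₂ i, Disjoint (chainE T (dl₂ i) c₂) (T.pathEdges p) := h2dgl
    have hll : ∀ i ∈ A, dl₁ i ≠ dl₂ i := by
      intro i hi heq
      have h1 := (hdgl₁ i (Finset.mem_union_right _ hi)).2.1
      have h2 := (hdgl₂ i (Finset.mem_union_right _ hi)).2.1
      rw [heq] at h1
      exact subtree_disjoint T hC₁ hC₂ hne h1 h2
    have hLCA : ∀ i ∈ A, T.isLCA (dl₁ i) (dl₂ i) v := by
      intro i hi
      have h1 := (hdgl₁ i (Finset.mem_union_right _ hi)).2.1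
      have h2 := (hdgl₂ i (Finset.mem_union_right _ hi)).2.1
      refine ⟨desc_of_child T h1 hC₁, desc_of_child T h2 hC₂, ?_⟩
      intro w hw1 hw2
      rcases anc_chain T (desc_of_child T h1 hC₁) hw1 with h | h
      · exact h
      · by_cases hwv : w = v
        · rw [hwv]; exact desc_refl T v
        · obtain ⟨c, hc, hwc⟩ := strictDesc_child T ⟨h, hwv⟩
          have hcmem : c ∈ children T v := (mem_children T).mpr hc
          rw [hch] at hcmem
          exfalso
          rcases Finset.mem_insert.mp hcmem with rfl | hcm
          · exact subtree_disjoint T hC₂ hC₁ (Ne.symm hne) h2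
              (desc_trans T hw2 hwc)
          · rw [Finset.mem_singleton.mp hcm] at hwc
            exact subtree_disjoint T hC₁ hC₂ hne h1 (desc_trans T hw1 hwc)
    -- the chain from a dangling leaf up to v
    have hchain₁ : ∀ i ∈ D₁ ∪ A, chainE T (dl₁ i) v = chainE T (dl₁ i) c₁ ∪ {c₁} :=
      fun i hi => chainE_split T hC₁ (hdgl₁ i hi).2.1
    have hchain₂ : ∀ i ∈ D₂ ∪ A, chainE T (dl₂ i) v = chainE T (dl₂ i) c₂ ∪ {c₂} :=
      fun i hi => chainE_split T hC₂ (hdgl₂ i hi).2.1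
    have hc₁notin : ∀ i, ∀ p ∈ PS₁ i, c₁ ∉ T.pathEdges p := by
      intro i p hp hmem
      exact (hsub₁ i p hp hmem).2 rfl
    have hc₂notin : ∀ i, ∀ p ∈ PS₂ i, c₂ ∉ T.pathEdges p := by
      intro i p hp hmem
      exact (hsub₂ i p hp hmem).2 rfl
    -- disjointness of a dangling chain (up to v) on the c₁ side from all paths
    have hchdis₁ : ∀ i ∈ D₁ ∪ A, ∀ p, p ∈ PS₁ i ∪ PS₂ i →
        Disjoint (chainE T (dl₁ i) v) (T.pathEdges p) := by
      intro i hi p hp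
      rw [hchain₁ i hi, Set.disjoint_union_left]
      rcases Finset.mem_union.mp hp with hp | hp
      · constructor
        · exact (hdgl₁ i hi).2.2 p hp
        · rw [Set.disjoint_left]
          rintro w rfl
          exact hc₁notin i p hp
      · constructor
        · refine Set.disjoint_of_subset ?_ ?_ hSdis
          · exact fun w hw => hw.2.1
          · exact fun w hw => (hsub₂ i p hp hw).1
        · rw [Set.disjoint_singleton_left]
          intro hmem
          exact subtree_disjoint T hC₁ hC₂ hne (desc_refl T c₁) (hsub₂ i p hp hmem).1
    have hchdis₂ : ∀ i ∈ D₂ ∪ A, ∀ p, p ∈ PS₁ i ∪ PS₂ i →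
        Disjoint (chainE T (dl₂ i) v) (T.pathEdges p) := by
      intro i hi p hp
      rw [hchain₂ i hi, Set.disjoint_union_left]
      rcases Finset.mem_union.mp hp with hp | hp
      · constructor
        · refine Set.disjoint_of_subset ?_ ?_ hSdis.symm
          · exact fun w hw => hw.2.1
          · exact fun w hw => (hsub₁ i p hp hw).1
        · rw [Set.disjoint_singleton_left]
          intro hmem
          exact subtree_disjoint T hC₂ hC₁ (Ne.symm hne) (desc_refl T c₂)
            (hsub₁ i p hp hmem).1
      · constructor
        · exact (hdgl₂ i hi).2.2 p hp
        · rw [Set.disjoint_singleton_left]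
          exact hc₂notin i p hp
    -- the new pair topped at v, for layers in A
    have hnewEdges : ∀ i ∈ A, T.pathEdges s(dl₁ i, dl₂ i) =
        (chainE T (dl₁ i) c₁ ∪ {c₁}) ∪ (chainE T (dl₂ i) c₂ ∪ {c₂}) := by
      intro i hi
      rw [pathEdges_char T (hLCA i hi), hchain₁ i (Finset.mem_union_right _ hi),
        hchain₂ i (Finset.mem_union_right _ hi)]
    have hnewdis : ∀ i ∈ A, ∀ p, p ∈ PS₁ i ∪ PS₂ i →
        Disjoint (T.pathEdges s(dl₁ i, dl₂ i)) (T.pathEdges p) := by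
      intro i hi p hp
      rw [pathEdges_char T (hLCA i hi), Set.disjoint_union_left]
      exact ⟨hchdis₁ i (Finset.mem_union_right _ hi) p hp,
        hchdis₂ i (Finset.mem_union_right _ hi) p hp⟩
    -- assemble the combined system
    refine ⟨fun i => (PS₁ i ∪ PS₂ i) ∪ (if i ∈ A then {s(dl₁ i, dl₂ i)} else ∅),
      fun i => if i ∈ D₁ then dl₁ i else dl₂ i, ?_, ?_, ?_, ?_, ?_⟩
    · -- leaves and non-degeneracy
      intro i p hp
      rcases Finset.mem_union.mp hp with hp | hp
      · rcases Finset.mem_union.mp hp with hp | hp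
        · exact h1ld i p hp
        · exact h2ld i p hp
      · have hiA : i ∈ A := by
          by_contra hiA
          simp [hiA] at hp
        rw [if_pos hiA, Finset.mem_singleton] at hp
        subst hp
        have hA₁ := hdgl₁ i (Finset.mem_union_right _ hiA)
        have hA₂ := hdgl₂ i (Finset.mem_union_right _ hiA)
        constructor
        · intro l hl
          rcases Sym2.mem_iff.mp hl with rfl | rfl
          · exact hA₁.1
          · exact hA₂.1
        · intro hdiag
          exact hll i hiA (Sym2.mk_isDiag_iff.mp hdiag)
    · -- tops lie in the subtree
      intro i p hp
      rcases Finset.mem_union.mp hp with hp | hp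
      · rcases Finset.mem_union.mp hp with hp | hp
        · obtain ⟨u, hu, htop⟩ := h1top i p hp
          exact ⟨u, desc_of_child T hu hC₁, htop⟩
        · obtain ⟨u, hu, htop⟩ := h2top i p hp
          exact ⟨u, desc_of_child T hu hC₂, htop⟩
      · have hiA : i ∈ A := by
          by_contra hiA
          simp [hiA] at hp
        rw [if_pos hiA, Finset.mem_singleton] at hp
        subst hp
        exact ⟨v, desc_refl T v, hLCA i hiA⟩
    · -- pairwise edge-disjointness within each layer
      intro i p hp q hq hpq
      simp only [Finset.coe_union, Set.mem_union, Finset.mem_coe] at hp hq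
      have hmem : ∀ r, (r ∈ PS₁ i ∨ r ∈ PS₂ i) ∨ r ∈ (if i ∈ A then ({s(dl₁ i, dl₂ i)} : Finset (Sym2 V)) else ∅) →
          r ∈ PS₁ i ∪ PS₂ i ∨ (i ∈ A ∧ r = s(dl₁ i, dl₂ i)) := by
        intro r hr
        rcases hr with hr | hr
        · exact Or.inl (Finset.mem_union.mpr hr)
        · by_cases hiA : i ∈ A
          · rw [if_pos hiA, Finset.mem_singleton] at hr
            exact Or.inr ⟨hiA, hr⟩
          · simp [hiA] at hr
      rcases hmem p hp with hp' | ⟨hiA, rfl⟩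
      · rcases hmem q hq with hq' | ⟨hiA, rfl⟩
        · -- both in the child systems
          rcases Finset.mem_union.mp hp' with hp'' | hp'' <;>
            rcases Finset.mem_union.mp hq' with hq'' | hq''
          · exact h1dis i hp'' hq'' hpq
          · exact Set.disjoint_of_subset (fun w hw => (hsub₁ i p hp'' hw).1)
              (fun w hw => (hsub₂ i q hq'' hw).1) hSdis
          · exact Set.disjoint_of_subset (fun w hw => (hsub₂ i p hp'' hw).1)
              (fun w hw => (hsub₁ i q hq'' hw).1) hSdis.symm
          · exact h2dis i hp'' hq'' hpq
        · exact (hnewdis i hiA p hp').symm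
      · rcases hmem q hq with hq' | ⟨hiA', rfl⟩
        · exact hnewdis i hiA q hq'
        · exact absurd rfl hpq
    · -- counting tops
      intro u hu
      have htopin₁ : ∀ i p, p ∈ PS₁ i → ∀ w, T.isTopOf w p → T.desc w c₁ := by
        intro i p hp w htw
        obtain ⟨u', hu', htop⟩ := h1top i p hp
        rw [top_unique T htw htop]
        exact hu'
      have htopin₂ : ∀ i p, p ∈ PS₂ i → ∀ w, T.isTopOf w p → T.desc w c₂ := by
        intro i p hp w htw
        obtain ⟨u', hu', htop⟩ := h2top i p hp
        rw [top_unique T htw htop]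
        exact hu'
      have hcases : u = v ∨ (T.desc u c₁ ∧ u ≠ v) ∨ (T.desc u c₂ ∧ u ≠ v) := by
        by_cases huv : u = v
        · exact Or.inl huv
        · obtain ⟨c, hc, hwc⟩ := strictDesc_child T ⟨hu, huv⟩
          have hcmem : c ∈ children T v := (mem_children T).mpr hc
          rw [hch] at hcmem
          rcases Finset.mem_insert.mp hcmem with rfl | hcm
          · exact Or.inr (Or.inl ⟨hwc, huv⟩)
          · rw [Finset.mem_singleton.mp hcm] at hwc
            exact Or.inr (Or.inr ⟨hwc, huv⟩)
      rcases hcases with rfl | ⟨hu₁, huv⟩ | ⟨hu₂, huv⟩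
      · -- u = v : the set of layers with a top at v is exactly A
        have hfe : (Finset.univ.filter fun i : Fin m =>
            ∃ p ∈ (PS₁ i ∪ PS₂ i) ∪ (if i ∈ A then ({s(dl₁ i, dl₂ i)} : Finset (Sym2 V)) else ∅),
              T.isTopOf u p) = A := by
          ext i
          simp only [Finset.mem_filter, Finset.mem_univ, true_and]
          constructor
          · rintro ⟨p, hp, htw⟩
            rcases Finset.mem_union.mp hp with hp | hp
            · exfalso
              rcases Finset.mem_union.mp hp with hp | hp
              · have := htopin₁ i p hp u htw
                exact hC₁.2 (desc_antisymm T (child_strictDesc T hC₁).1 this)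
              · have := htopin₂ i p hp u htw
                exact hC₂.2 (desc_antisymm T (child_strictDesc T hC₂).1 this)
            · by_cases hiA : i ∈ A
              · exact hiA
              · simp [hiA] at hp
          · intro hiA
            exact ⟨s(dl₁ i, dl₂ i),
              Finset.mem_union_right _ (by rw [if_pos hiA]; exact Finset.mem_singleton_self _),
              hLCA i hiA⟩
        rw [hfe, if_pos (show T.isInternal u from hv), hAcard, Int.toNat_of_nonneg hzv]
      · -- u in the subtree of c₁
        have hnot₂ : ¬ T.desc u c₂ := subtree_disjoint T hC₁ hC₂ hne hu₁
        have hfe : (Finset.univ.filter fun i : Fin m =>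
            ∃ p ∈ (PS₁ i ∪ PS₂ i) ∪ (if i ∈ A then ({s(dl₁ i, dl₂ i)} : Finset (Sym2 V)) else ∅),
              T.isTopOf u p) =
            (Finset.univ.filter fun i : Fin m => ∃ p ∈ PS₁ i, T.isTopOf u p) := by
          ext i
          simp only [Finset.mem_filter, Finset.mem_univ, true_and]
          constructor
          · rintro ⟨p, hp, htw⟩
            rcases Finset.mem_union.mp hp with hp | hp
            · rcases Finset.mem_union.mp hp with hp | hp
              · exact ⟨p, hp, htw⟩
              · exact absurd (htopin₂ i p hp u htw) hnot₂
            · by_cases hiA : i ∈ A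
              · rw [if_pos hiA, Finset.mem_singleton] at hp
                subst hp
                exact absurd (top_unique T htw (hLCA i hiA)) huv
              · simp [hiA] at hp
          · rintro ⟨p, hp, htw⟩
            exact ⟨p, Finset.mem_union_left _ (Finset.mem_union_left _ hp), htw⟩
        rw [hfe]
        exact h1cnt u hu₁
      · -- u in the subtree of c₂
        have hnot₁ : ¬ T.desc u c₁ := subtree_disjoint T hC₂ hC₁ (Ne.symm hne) hu₂
        have hfe : (Finset.univ.filter fun i : Fin m =>
            ∃ p ∈ (PS₁ i ∪ PS₂ i) ∪ (if i ∈ A then ({s(dl₁ i, dl₂ i)} : Finset (Sym2 V)) else ∅),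
              T.isTopOf u p) =
            (Finset.univ.filter fun i : Fin m => ∃ p ∈ PS₂ i, T.isTopOf u p) := by
          ext i
          simp only [Finset.mem_filter, Finset.mem_univ, true_and]
          constructor
          · rintro ⟨p, hp, htw⟩
            rcases Finset.mem_union.mp hp with hp | hp
            · rcases Finset.mem_union.mp hp with hp | hp
              · exact absurd (htopin₁ i p hp u htw) hnot₁
              · exact ⟨p, hp, htw⟩
            · by_cases hiA : i ∈ A
              · rw [if_pos hiA, Finset.mem_singleton] at hp
                subst hp
                exact absurd (top_unique T htw (hLCA i hiA)) huv
              · simp [hiA] at hp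
          · rintro ⟨p, hp, htw⟩
            exact ⟨p, Finset.mem_union_left _ (Finset.mem_union_right _ hp), htw⟩
        rw [hfe]
        exact h2cnt u hu₂
    · -- dangling chains
      intro i hiD
      dsimp only
      have hiA : i ∉ A := fun h => hAD i h hiD
      have hmemPS : ∀ p, p ∈ (PS₁ i ∪ PS₂ i) ∪
          (if i ∈ A then ({s(dl₁ i, dl₂ i)} : Finset (Sym2 V)) else ∅) → p ∈ PS₁ i ∪ PS₂ i := by
        intro p hp
        rcases Finset.mem_union.mp hp with hp | hp
        · exact hp
        · rw [if_neg hiA] at hp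
          exact absurd hp (Finset.notMem_empty p)
      by_cases hiD₁ : i ∈ D₁
      · rw [if_pos hiD₁]
        have hA₁ := hdgl₁ i (Finset.mem_union_left _ hiD₁)
        refine ⟨hA₁.1, desc_of_child T hA₁.2.1 hC₁, ?_⟩
        intro p hp
        exact hchdis₁ i (Finset.mem_union_left _ hiD₁) p (hmemPS p hp)
      · rw [if_neg hiD₁]
        have hiD₂ : i ∈ D₂ := Finset.mem_sdiff.mpr ⟨hiD, hiD₁⟩
        have hA₂ := hdgl₂ i (Finset.mem_union_left _ hiD₂)
        refine ⟨hA₂.1, desc_of_child T hA₂.2.1 hC₂, ?_⟩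
        intro p hp
        exact hchdis₂ i (Finset.mem_union_left _ hiD₂) p (hmemPS p hp)

end RBTAux
/-- Let `T` be a rooted binary tree.  For every positive integer `m`,
every lattice point `z ∈ ℤ^{Int(T)}` lying in the dilate `m·R_T` can be written as a sum
of `m` top-vectors of systems of disjoint paths in `T` (so `R_T` is a normal lattice
polytope). -/
theorem cfnmc_polytope_normal {V : Type} [Fintype V] [DecidableEq V] (T : RBT V)
    (m : ℕ) (hm : 0 < m) (z : {v : V // T.isInternal v} → ℤ)
    (hz : (fun v => (z v : ℝ)) ∈ (m : ℝ) • T.cfnmcPolytope) :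
    ∃ P : Fin m → PathSystem T, (fun v => (z v : ℝ)) = ∑ i, (P i).topVector := by
  classical
  obtain ⟨y, hy, hyz⟩ := Set.mem_smul_set.mp hz
  have hyK : y ∈ RBTAux.K T :=
    convexHull_min (RBTAux.topVectors_subset_K T) (RBTAux.K_convex T) hy
  set zE : V → ℤ := fun v => if h : T.isInternal v then z ⟨v, h⟩ else 0 with hzE
  have hm0 : (0 : ℝ) ≤ (m : ℝ) := by positivity
  have hcast : ∀ u : V, ((zE u : ℤ) : ℝ) = (m : ℝ) * RBTAux.ext T y u := by
    intro u
    by_cases h : T.isInternal u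
    · have h1 := congrFun hyz ⟨u, h⟩
      simp only [Pi.smul_apply, smul_eq_mul] at h1
      have h2 : zE u = z ⟨u, h⟩ := by rw [hzE]; simp only [dif_pos h]
      have h3 : RBTAux.ext T y u = y ⟨u, h⟩ := by rw [RBTAux.ext, dif_pos h]
      rw [h2, h3, h1]
    · have h2 : zE u = 0 := by rw [hzE]; simp only [dif_neg h]
      have h3 : RBTAux.ext T y u = 0 := by rw [RBTAux.ext, dif_neg h]
      rw [h2, h3]
      simp
  have hcastf : (fun u => ((zE u : ℤ) : ℝ)) = fun u => (m : ℝ) * RBTAux.ext T y u :=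
    funext hcast
  have hFeas : RBTAux.Feas T (m : ℤ) zE := by
    intro u hu
    have hK := hyK u hu
    constructor
    · have h0 : (0 : ℝ) ≤ ((zE u : ℤ) : ℝ) := by
        rw [hcast u]
        exact mul_nonneg hm0 hK.1
      exact_mod_cast h0
    · intro c hc
      have hhom : RBTAux.aR T ((m : ℝ) * 1) (fun w => (m : ℝ) * RBTAux.ext T y w) c
          = (m : ℝ) * RBTAux.aR T 1 (RBTAux.ext T y) c :=
        RBTAux.aR_smul T (m : ℝ) 1 hm0 (RBTAux.ext T y) c
      rw [mul_one] at hhom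
      have hreal : ((zE u : ℤ) : ℝ) ≤ RBTAux.aR T (m : ℝ) (fun w => ((zE w : ℤ) : ℝ)) c := by
        rw [hcast u, hcastf, hhom]
        exact mul_le_mul_of_nonneg_left (hK.2 c hc) hm0
      have hc2 : RBTAux.aR T (((m : ℤ) : ℝ)) (fun w => ((zE w : ℤ) : ℝ)) c
          = ((RBTAux.aZ T (m : ℤ) zE c : ℤ) : ℝ) := RBTAux.aR_cast T (m : ℤ) zE c
      rw [show (((m : ℤ) : ℝ)) = ((m : ℕ) : ℝ) by push_cast; ring] at hc2
      rw [hc2] at hreal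
      exact_mod_cast hreal
  have hroot : (((∅ : Finset (Fin m)).card : ℕ) : ℤ) ≤ RBTAux.aZ T (m : ℤ) zE T.root := by
    simpa using RBTAux.aZ_nonneg T (by positivity) hFeas T.root
  obtain ⟨PS, dl, hld, htop, hdis, hcnt, -⟩ :=
    RBTAux.decompose T m zE hFeas T.root ∅ hroot
  refine ⟨fun i => ⟨PS i, fun p hp => (hld i p hp).1, fun p hp => (hld i p hp).2, hdis i⟩, ?_⟩
  funext w
  have hcw := hcnt w.1 (RBTAux.desc_root T w.1)
  rw [if_pos w.2] at hcw
  have hzw : zE w.1 = z w := by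
    rw [hzE]
    simp only [dif_pos w.2]
  rw [hzw] at hcw
  have hsum : ∀ i : Fin m,
      (PathSystem.topVector (T := T)
        ⟨PS i, fun p hp => (hld i p hp).1, fun p hp => (hld i p hp).2, hdis i⟩) w
      = if (∃ p ∈ PS i, T.isTopOf w.1 p) then (1 : ℝ) else 0 := by
    intro i
    rw [PathSystem.topVector, Set.indicator_apply]
    exact if_congr Iff.rfl rfl rfl
  rw [Finset.sum_apply]
  calc ((z w : ℤ) : ℝ)
      = (((Finset.univ.filter fun i : Fin m => ∃ p ∈ PS i, T.isTopOf w.1 p).card : ℤ) : ℝ) := by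
        rw [hcw]
    _ = ∑ i : Fin m, if (∃ p ∈ PS i, T.isTopOf w.1 p) then (1 : ℝ) else 0 := by
        rw [Finset.sum_boole]
        norm_num
    _ = _ := by
        exact (Finset.sum_congr rfl fun i _ => (hsum i).symm)
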